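/- arXiv:2008.09921 — 8 statements merged into one kernel-verified Lean document; each statement's English description precedes it below -/
import Mathlib

section
/- Let G, H be digraphs with list function L such that G ×_L H^3 admits a Maltsev list polymorphism. Suppose the lists are arc- and pair-consistent, and suppose (a,c), (b,c), (b,d) all belong to the pair list L(x,y) for vertices x, y of G. Then (a,d) ∈ L(x,y). -/
/-- A walk of length `ℓ` following the orientation pattern `ε`. -/
def IsWalkOn {V : Type*} (A : V → V → Prop) (ℓ : ℕ) (ε : ℕ → Bool) (w : ℕ → V) : Prop :=
  ∀ i, i + 1 < ℓ → (if ε i then A (w i) (w (i + 1)) else A (w (i + 1)) (w i))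

/-- A Maltsev list polymorphism on `G ×_L H³`. -/
def IsMaltsevListPoly {VG VH : Type*} (AG : VG → VG → Prop) (AH : VH → VH → Prop)
    (L : VG → Set VH) (h : VG → VH → VH → VH → VH) : Prop :=
  (∀ x a₁ a₂ a₃, a₁ ∈ L x → a₂ ∈ L x → a₃ ∈ L x → h x a₁ a₂ a₃ ∈ L x) ∧
  (∀ x y a₁ a₂ a₃ b₁ b₂ b₃, AG x y → a₁ ∈ L x → a₂ ∈ L x → a₃ ∈ L x →
      b₁ ∈ L y → b₂ ∈ L y → b₃ ∈ L y → AH a₁ b₁ → AH a₂ b₂ → AH a₃ b₃ →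
      AH (h x a₁ a₂ a₃) (h y b₁ b₂ b₃)) ∧
  (∀ x a b, a ∈ L x → b ∈ L x → h x a b b = a ∧ h x b b a = a)

/-- `(a,b)` belongs to the pair list `L(x,y)`: for every oriented walk in `G` from `x`
to `y` there is a congruent walk in `H` from `a` to `b` staying inside the lists. -/
def InPairList {VG VH : Type*} (AG : VG → VG → Prop) (AH : VH → VH → Prop)
    (L : VG → Set VH) (x y : VG) (a b : VH) : Prop :=
  ∀ (ℓ : ℕ) (ε : ℕ → Bool) (w : ℕ → VG), 1 ≤ ℓ → IsWalkOn AG ℓ ε w →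
    w 0 = x → w (ℓ - 1) = y →
    ∃ p : ℕ → VH, IsWalkOn AH ℓ ε p ∧ (∀ i, i < ℓ → p i ∈ L (w i)) ∧
      p 0 = a ∧ p (ℓ - 1) = b

/-- Corollary: rectangle property of pair lists. In presence of a Maltsev
list polymorphism, `(a,c), (b,c), (b,d) ∈ L(x,y)` imply `(a,d) ∈ L(x,y)`. -/
theorem pair_list_rectangular {VG VH : Type*} (AG : VG → VG → Prop) (AH : VH → VH → Prop)
    (L : VG → Set VH) (h : VG → VH → VH → VH → VH)
    (hML : IsMaltsevListPoly AG AH L h)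
    (x y : VG) (a b c d : VH)
    (ha : a ∈ L x) (hb : b ∈ L x) (hc : c ∈ L y) (hd : d ∈ L y)
    (hac : InPairList AG AH L x y a c)
    (hbc : InPairList AG AH L x y b c)
    (hbd : InPairList AG AH L x y b d) :
    InPairList AG AH L x y a d := by
  obtain ⟨hmem, harc, hmal⟩ := hML
  intro ℓ ε w hℓ hw hw0 hwl
  obtain ⟨p₁, hp₁, hL₁, h₁0, h₁l⟩ := hac ℓ ε w hℓ hw hw0 hwl
  obtain ⟨p₂, hp₂, hL₂, h₂0, h₂l⟩ := hbc ℓ ε w hℓ hw hw0 hwl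
  obtain ⟨p₃, hp₃, hL₃, h₃0, h₃l⟩ := hbd ℓ ε w hℓ hw hw0 hwl
  refine ⟨fun i => h (w i) (p₁ i) (p₂ i) (p₃ i), ?_, ?_, ?_, ?_⟩
  · intro i hi
    have hi' : i < ℓ := by omega
    have hi1 : i + 1 < ℓ := hi
    have hG := hw i hi
    have h1 := hp₁ i hi
    have h2 := hp₂ i hi
    have h3 := hp₃ i hi
    cases hε : ε i <;> simp [hε] at hG h1 h2 h3 ⊢
    · exact harc _ _ _ _ _ _ _ _ hG (hL₁ _ hi1) (hL₂ _ hi1) (hL₃ _ hi1)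
        (hL₁ _ hi') (hL₂ _ hi') (hL₃ _ hi') h1 h2 h3
    · exact harc _ _ _ _ _ _ _ _ hG (hL₁ _ hi') (hL₂ _ hi') (hL₃ _ hi')
        (hL₁ _ hi1) (hL₂ _ hi1) (hL₃ _ hi1) h1 h2 h3
  · intro i hi
    exact hmem _ _ _ _ (hL₁ _ hi) (hL₂ _ hi) (hL₃ _ hi)
  · simp only [hw0, h₁0, h₂0, h₃0]
    exact (hmal x a b ha hb).1
  · simp only [hwl, h₁l, h₂l, h₃l]
    exact (hmal y d c hd hc).2
end

section
/- There exist digraphs G, H and a list function L : V(G) → 2^{V(H)} such that G ×_L H^3 admits a Maltsev list polymorphism, but G ×_L H^3 admits no majority list polymorphism. Concretely, one may take G with vertices {x,y,z,w} and H with 10 vertices as in Example 1 of the paper. -/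
/-- A majority list polymorphism on `G ×_L H³`. -/
def IsMajorityListPoly {VG VH : Type*} (AG : VG → VG → Prop) (AH : VH → VH → Prop)
    (L : VG → Set VH) (g : VG → VH → VH → VH → VH) : Prop :=
  (∀ x a₁ a₂ a₃, a₁ ∈ L x → a₂ ∈ L x → a₃ ∈ L x → g x a₁ a₂ a₃ ∈ L x) ∧
  (∀ x y a₁ a₂ a₃ b₁ b₂ b₃, AG x y → a₁ ∈ L x → a₂ ∈ L x → a₃ ∈ L x →
      b₁ ∈ L y → b₂ ∈ L y → b₃ ∈ L y → AH a₁ b₁ → AH a₂ b₂ → AH a₃ b₃ →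
      AH (g x a₁ a₂ a₃) (g y b₁ b₂ b₃)) ∧
  (∀ x a b, a ∈ L x → b ∈ L x → g x a b b = b ∧ g x b a b = b ∧ g x b b a = b)

/-- Lists: `x,y,z` get two "bit" vertices each; `w` gets the 4 even-parity triples. -/
def lfun : Fin 4 → List (Fin 10) := ![[0,1], [2,3], [4,5], [6,7,8,9]]

/-- Arcs of `G`: `x→w, y→w, z→w`. -/
def arcsG : List (Fin 4 × Fin 4) := [(0,3), (1,3), (2,3)]

/-- Arcs of `H`: a bit vertex points to a triple iff its bit matches the right coordinate.
Triples: 6 = (0,0,0), 7 = (0,1,1), 8 = (1,0,1), 9 = (1,1,0). -/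
def arcsH : List (Fin 10 × Fin 10) :=
  [(0,6),(0,7),(1,8),(1,9),(2,6),(2,8),(3,7),(3,9),(4,6),(4,9),(5,7),(5,8)]

/-- 3-bit codes of the vertices of `H` relevant to xor. -/
def code : Fin 10 → Nat := ![0,1,0,1,0,1,0,3,5,6]

/-- Decode a code back into the list of vertex `x`. -/
def dec : Fin 4 → Nat → Fin 10
  | 0, n => if n % 2 = 0 then 0 else 1
  | 1, n => if n % 2 = 0 then 2 else 3
  | 2, n => if n % 2 = 0 then 4 else 5
  | 3, n => if n = 0 then 6 else if n = 3 then 7 else if n = 5 then 8 else 9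

/-- The coordinatewise-xor Maltsev operation. -/
def mal (x : Fin 4) (a b c : Fin 10) : Fin 10 := dec x (code a ^^^ code b ^^^ code c)

/-- Boolean check that `mal` preserves all arcs. -/
def chk : Bool :=
  arcsG.all fun p => (lfun p.1).all fun a₁ => (lfun p.1).all fun a₂ =>
    (lfun p.1).all fun a₃ => (lfun p.2).all fun b₁ => (lfun p.2).all fun b₂ =>
      (lfun p.2).all fun b₃ =>
        decide (((a₁, b₁) ∈ arcsH ∧ (a₂, b₂) ∈ arcsH ∧ (a₃, b₃) ∈ arcsH) →
          (mal p.1 a₁ a₂ a₃, mal p.2 b₁ b₂ b₃) ∈ arcsH)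

lemma chk_true : chk = true := by decide

/-- there is an instance (with `G` on 4 vertices and `H` on 10 vertices)
admitting a Maltsev list polymorphism on `G ×_L H³` but no majority list polymorphism. -/
theorem exists_maltsev_no_majority :
    ∃ (AG : Fin 4 → Fin 4 → Prop) (AH : Fin 10 → Fin 10 → Prop)
      (L : Fin 4 → Set (Fin 10)),
      (∃ h, IsMaltsevListPoly AG AH L h) ∧ ¬ ∃ g, IsMajorityListPoly AG AH L g := by
  refine ⟨fun x y => (x, y) ∈ arcsG, fun a b => (a, b) ∈ arcsH,
    fun x => {a | a ∈ lfun x}, ⟨mal, ?_, ?_, ?_⟩, ?_⟩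
  · -- closedness of the lists under `mal`
    have key : ∀ x : Fin 4, ∀ a₁ ∈ lfun x, ∀ a₂ ∈ lfun x, ∀ a₃ ∈ lfun x,
        mal x a₁ a₂ a₃ ∈ lfun x := by decide
    exact fun x a₁ a₂ a₃ h₁ h₂ h₃ => key x a₁ h₁ a₂ h₂ a₃ h₃
  · -- arc preservation
    intro x y a₁ a₂ a₃ b₁ b₂ b₃ hG h₁ h₂ h₃ k₁ k₂ k₃ e₁ e₂ e₃
    have t := List.all_eq_true.mp (List.all_eq_true.mp (List.all_eq_true.mp
      (List.all_eq_true.mp (List.all_eq_true.mp (List.all_eq_true.mp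
        (List.all_eq_true.mp chk_true (x, y) hG) a₁ h₁) a₂ h₂) a₃ h₃) b₁ k₁) b₂ k₂) b₃ k₃
    exact of_decide_eq_true t ⟨e₁, e₂, e₃⟩
  · -- Maltsev identities
    have key : ∀ x : Fin 4, ∀ a ∈ lfun x, ∀ b ∈ lfun x,
        mal x a b b = a ∧ mal x b b a = a := by decide
    exact fun x a b ha hb => key x a ha b hb
  · -- no majority polymorphism
    rintro ⟨g, hmem, harc, hmaj⟩
    -- the value of g at w on the three triples (0,1,1),(1,0,1),(1,1,0)
    have hs : g 3 7 8 9 ∈ lfun 3 :=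
      hmem 3 7 8 9 (show (7:Fin 10) ∈ lfun 3 by decide)
        (show (8:Fin 10) ∈ lfun 3 by decide) (show (9:Fin 10) ∈ lfun 3 by decide)
    have e0 : g 0 0 1 1 = 1 :=
      (hmaj 0 0 1 (show (0:Fin 10) ∈ lfun 0 by decide)
        (show (1:Fin 10) ∈ lfun 0 by decide)).1
    have e1 : g 1 3 2 3 = 3 :=
      (hmaj 1 2 3 (show (2:Fin 10) ∈ lfun 1 by decide)
        (show (3:Fin 10) ∈ lfun 1 by decide)).2.1
    have e2 : g 2 5 5 4 = 5 :=
      (hmaj 2 4 5 (show (4:Fin 10) ∈ lfun 2 by decide)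
        (show (5:Fin 10) ∈ lfun 2 by decide)).2.2
    have h1 : ((1 : Fin 10), g 3 7 8 9) ∈ arcsH := by
      have := harc 0 3 0 1 1 7 8 9 (by decide)
        (show (0:Fin 10) ∈ lfun 0 by decide) (show (1:Fin 10) ∈ lfun 0 by decide)
        (show (1:Fin 10) ∈ lfun 0 by decide)
        (show (7:Fin 10) ∈ lfun 3 by decide) (show (8:Fin 10) ∈ lfun 3 by decide)
        (show (9:Fin 10) ∈ lfun 3 by decide)
        (by decide) (by decide) (by decide)
      rwa [e0] at this
    have h2 : ((3 : Fin 10), g 3 7 8 9) ∈ arcsH := by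
      have := harc 1 3 3 2 3 7 8 9 (by decide)
        (show (3:Fin 10) ∈ lfun 1 by decide) (show (2:Fin 10) ∈ lfun 1 by decide)
        (show (3:Fin 10) ∈ lfun 1 by decide)
        (show (7:Fin 10) ∈ lfun 3 by decide) (show (8:Fin 10) ∈ lfun 3 by decide)
        (show (9:Fin 10) ∈ lfun 3 by decide)
        (by decide) (by decide) (by decide)
      rwa [e1] at this
    have h3 : ((5 : Fin 10), g 3 7 8 9) ∈ arcsH := by
      have := harc 2 3 5 5 4 7 8 9 (by decide)
        (show (5:Fin 10) ∈ lfun 2 by decide) (show (5:Fin 10) ∈ lfun 2 by decide)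
        (show (4:Fin 10) ∈ lfun 2 by decide)
        (show (7:Fin 10) ∈ lfun 3 by decide) (show (8:Fin 10) ∈ lfun 3 by decide)
        (show (9:Fin 10) ∈ lfun 3 by decide)
        (by decide) (by decide) (by decide)
      rwa [e2] at this
    -- but no even-parity triple has all three coordinates equal to 1
    revert hs h1 h2 h3
    generalize g 3 7 8 9 = s
    revert s
    decide
end

section
/- Under the reduction from hypergraph list homomorphism to graph list homomorphism via signatures, if the hypergraph ℋ admits a polymorphism h of arity r that is closed on each list ℒ(α) (i.e., applying h coordinatewise to any r hyperedges of ℒ(α) yields a hyperedge of ℒ(α)), then the constructed instance G, H, L admits a list polymorphism φ of arity r on G ×_L H^r given by φ(ᾱ; τ̄_1,...,τ̄_r) = overline{h(τ_1,...,τ_r)}. -/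
/-- The signature of two ordered tuples (lists). -/
def Sig {X : Type*} (α β : List X) : Set (ℕ × ℕ) :=
  {p | ∃ v, α[p.1]? = some v ∧ β[p.2]? = some v}

/-- Coordinatewise application of an `r`-ary operation `h` to `r` lists,
producing a list of length `n`. -/
def hApplyL {A : Type*} [Inhabited A] {r : ℕ} (h : (Fin r → A) → A)
    (ts : Fin r → List A) (n : ℕ) : List A :=
  (List.range n).map fun i => h fun j => (ts j).getD i default

lemma hApplyL_getElem? {A : Type*} [Inhabited A] {r : ℕ} (h : (Fin r → A) → A)
    (ts : Fin r → List A) (n i : ℕ) (hi : i < n) :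
    (hApplyL h ts n)[i]? = some (h fun j => (ts j).getD i default) := by
  simp [hApplyL, List.getElem?_map, List.getElem?_range hi]

/-- if the hypergraph lists are closed under an `r`-ary polymorphism `h`
(coordinatewise), then the signature-based graph instance `G, H, L` admits the list
polymorphism `φ(ᾱ; τ̄₁,…,τ̄ᵣ) = h(τ₁,…,τᵣ)` of arity `r` on `G ×_L H^r`:
`φ` maps tuples from each list into the list and preserves edges. -/
theorem hypergraph_poly_transfers {X A : Type*} [Inhabited A] {r : ℕ} [NeZero r]
    (𝒢 : Set (List X)) (ℒ : List X → Set (List A))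
    (hlen : ∀ α ∈ 𝒢, ∀ τ ∈ ℒ α, τ.length = α.length)
    (h : (Fin r → A) → A)
    (hclosed : ∀ α ∈ 𝒢, ∀ ts : Fin r → List A, (∀ j, ts j ∈ ℒ α) →
      hApplyL h ts α.length ∈ ℒ α) :
    ∃ φ : (x : {l : List X // l ∈ 𝒢}) →
        (Fin r → {t : List A // t ∈ ℒ x.val}) → {t : List A // t ∈ ℒ x.val},
      (∀ x ts, (φ x ts).val = hApplyL h (fun j => (ts j).val) x.val.length) ∧
      (∀ (x y : {l : List X // l ∈ 𝒢})
        (ts : Fin r → {t : List A // t ∈ ℒ x.val})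
        (us : Fin r → {t : List A // t ∈ ℒ y.val}),
        (Sig x.val y.val).Nonempty →
        (∀ j, Sig x.val y.val ⊆ Sig (ts j).val (us j).val) →
        Sig x.val y.val ⊆ Sig (φ x ts).val (φ y us).val) := by
  refine ⟨fun x ts => ⟨hApplyL h (fun j => (ts j).val) x.val.length,
    hclosed x.val x.prop _ (fun j => (ts j).prop)⟩, fun _ _ => rfl, ?_⟩
  intro x y ts us _ hsub p hp
  obtain ⟨v, hv1, hv2⟩ := hp
  have hi : p.1 < x.val.length := by
    by_contra hc
    rw [List.getElem?_eq_none (le_of_not_gt hc)] at hv1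
    exact Option.some_ne_none v hv1.symm
  have hj : p.2 < y.val.length := by
    by_contra hc
    rw [List.getElem?_eq_none (le_of_not_gt hc)] at hv2
    exact Option.some_ne_none v hv2.symm
  have key : ∀ k : Fin r, ((ts k).val.getD p.1 default) = ((us k).val.getD p.2 default) := by
    intro k
    obtain ⟨w, hw1, hw2⟩ := hsub k ⟨v, hv1, hv2⟩
    simp [List.getD_eq_getElem?_getD, hw1, hw2]
  refine ⟨h fun k => (ts k).val.getD p.1 default, ?_, ?_⟩
  · exact hApplyL_getElem? h _ _ _ hi
  · rw [hApplyL_getElem? h _ _ _ hj]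
    exact congrArg (fun f => some (h f)) (funext fun k => (key k).symm)
end

section
/- Under the signature-based reduction, if ℋ admits a Maltsev polymorphism h closed on each list ℒ(α), then the constructed graph instance admits a Maltsev list polymorphism on G ×_L H^3; in particular φ(x̄; ᾱ, β̄, β̄) = ᾱ and φ(x̄; β̄, β̄, ᾱ) = ᾱ for φ(x̄; τ̄_1, τ̄_2, τ̄_3) = overline{h(τ_1,τ_2,τ_3)}. -/
/-- Coordinatewise application of a ternary operation to three lists, producing a list
of length `n`. -/
def hApply3 {A : Type*} [Inhabited A] (h : A → A → A → A)
    (t₁ t₂ t₃ : List A) (n : ℕ) : List A :=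
  (List.range n).map fun i => h (t₁.getD i default) (t₂.getD i default) (t₃.getD i default)

lemma hApply3_getElem? {A : Type*} [Inhabited A] (h : A → A → A → A)
    (t₁ t₂ t₃ : List A) (n i : ℕ) (hi : i < n) :
    (hApply3 h t₁ t₂ t₃ n)[i]? =
      some (h (t₁.getD i default) (t₂.getD i default) (t₃.getD i default)) := by
  simp [hApply3, List.getElem?_map, List.getElem?_range hi]

lemma hApply3_self {A : Type*} [Inhabited A] (h : A → A → A → A)
    (hmal : ∀ a b : A, h a b b = a ∧ h b b a = a)
    (t ω : List A) (n : ℕ) (ht : t.length = n) (hω : ω.length = n)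
    (hcase : ∀ a b : A, h a b b = a) :
    hApply3 h t ω ω n = t := by
  apply List.ext_getElem
  · simp [hApply3, ht]
  · intro i h1 h2
    simp only [hApply3, List.getElem_map, List.getElem_range]
    have hi : i < n := by simpa [hApply3] using h1
    rw [List.getD_eq_getElem t default (by omega), hcase]

/-- if the hypergraph lists are closed under a Maltsev operation `h`
(coordinatewise), then the signature-based graph instance admits a Maltsev list
polymorphism `φ(x̄; τ̄₁,τ̄₂,τ̄₃) = h(τ₁,τ₂,τ₃)` on `G ×_L H³`; in particular
`φ(x̄; ᾱ, β̄, β̄) = ᾱ` and `φ(x̄; β̄, β̄, ᾱ) = ᾱ`. -/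
theorem hypergraph_maltsev_transfers {X A : Type*} [Inhabited A]
    (𝒢 : Set (List X)) (ℒ : List X → Set (List A))
    (hlen : ∀ α ∈ 𝒢, ∀ τ ∈ ℒ α, τ.length = α.length)
    (h : A → A → A → A)
    (hmal : ∀ a b : A, h a b b = a ∧ h b b a = a)
    (hclosed : ∀ α ∈ 𝒢, ∀ τ₁ ∈ ℒ α, ∀ τ₂ ∈ ℒ α, ∀ τ₃ ∈ ℒ α,
      hApply3 h τ₁ τ₂ τ₃ α.length ∈ ℒ α) :
    ∃ φ : (x : {l : List X // l ∈ 𝒢}) →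
        {t : List A // t ∈ ℒ x.val} → {t : List A // t ∈ ℒ x.val} →
        {t : List A // t ∈ ℒ x.val} → {t : List A // t ∈ ℒ x.val},
      (∀ x t₁ t₂ t₃, (φ x t₁ t₂ t₃).val = hApply3 h t₁.val t₂.val t₃.val x.val.length) ∧
      (∀ (x y : {l : List X // l ∈ 𝒢}) t₁ t₂ t₃ u₁ u₂ u₃,
        (Sig x.val y.val).Nonempty →
        Sig x.val y.val ⊆ Sig (t₁ : {t : List A // t ∈ ℒ x.val}).val
          (u₁ : {t : List A // t ∈ ℒ y.val}).val →
        Sig x.val y.val ⊆ Sig (t₂ : {t : List A // t ∈ ℒ x.val}).val (u₂ : {t : List A // t ∈ ℒ y.val}).val →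
        Sig x.val y.val ⊆ Sig (t₃ : {t : List A // t ∈ ℒ x.val}).val (u₃ : {t : List A // t ∈ ℒ y.val}).val →
        Sig x.val y.val ⊆ Sig (φ x t₁ t₂ t₃).val (φ y u₁ u₂ u₃).val) ∧
      (∀ x α β, φ x α β β = α ∧ φ x β β α = α) := by

  refine ⟨fun x t₁ t₂ t₃ => ⟨hApply3 h t₁.val t₂.val t₃.val x.val.length,
      hclosed x.val x.prop t₁.val t₁.prop t₂.val t₂.prop t₃.val t₃.prop⟩,
    fun _ _ _ _ => rfl, ?_, ?_⟩
  · intro x y t₁ t₂ t₃ u₁ u₂ u₃ _ hs1 hs2 hs3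
    rintro ⟨i, j⟩ hp
    obtain ⟨v, hv1, hv2⟩ := hp
    obtain ⟨w₁, hw1, hw1'⟩ := hs1 ⟨v, hv1, hv2⟩
    obtain ⟨w₂, hw2, hw2'⟩ := hs2 ⟨v, hv1, hv2⟩
    obtain ⟨w₃, hw3, hw3'⟩ := hs3 ⟨v, hv1, hv2⟩
    have hi : i < x.val.length := by
      by_contra hc
      rw [List.getElem?_eq_none (by omega)] at hv1; exact (Option.some_ne_none v hv1.symm)
    have hj : j < y.val.length := by
      by_contra hc
      rw [List.getElem?_eq_none (by omega)] at hv2; exact (Option.some_ne_none v hv2.symm)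
    refine ⟨h w₁ w₂ w₃, ?_, ?_⟩
    · rw [hApply3_getElem? h _ _ _ _ _ hi]
      simp only [List.getD_eq_getElem?_getD, hw1, hw2, hw3, Option.getD_some]
    · rw [hApply3_getElem? h _ _ _ _ _ hj]
      simp only [List.getD_eq_getElem?_getD, hw1', hw2', hw3', Option.getD_some]
  · intro x α β
    constructor
    · apply Subtype.ext
      exact hApply3_self h hmal α.val β.val x.val.length
        (hlen x.val x.prop α.val α.prop) (hlen x.val x.prop β.val β.prop)
        (fun a b => (hmal a b).1)
    · apply Subtype.ext
      show hApply3 h β.val β.val α.val x.val.length = α.val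
      apply List.ext_getElem
      · simp [hApply3, hlen x.val x.prop α.val α.prop]
      · intro i h1 h2
        simp only [hApply3, List.getElem_map, List.getElem_range]
        rw [List.getD_eq_getElem α.val default h2, (hmal _ _).2]
end

section
/- In the construction of graphs G, H, L from a hypergraph ℋ for recognizing Maltsev polymorphisms (vertices of G are triples (α,β,γ) of hyperedges from the same uniform part ℋ_l; lists encode Maltsev constraints), ℋ admits a Maltsev polymorphism if and only if there exists an L-homomorphism from G to H. -/
/-- The Maltsev-constraint list conditions: `τ ∈ L((α,β,γ))` requires
(i) if `α[i]=β[i]=γ[i]=a` then `τ[i]=a`, (ii) if `α[i]=β[i]` then `τ[i]=γ[i]`,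
(iii) if `β[i]=γ[i]` then `τ[i]=α[i]`. -/
def MaltsevListCond {A : Type*} (α β γ τ : List A) : Prop :=
  (∀ (i : ℕ) (a : A), α[i]? = some a → β[i]? = some a → γ[i]? = some a → τ[i]? = some a) ∧
  (∀ i : ℕ, α[i]? = β[i]? → τ[i]? = γ[i]?) ∧
  (∀ i : ℕ, β[i]? = γ[i]? → τ[i]? = α[i]?)

/-- `getElem?` of `zipWith3`. -/
lemma zipWith3_getElem? {A : Type*} (f : A → A → A → A) :
    ∀ (l₁ l₂ l₃ : List A) (i : ℕ),
      (List.zipWith3 f l₁ l₂ l₃)[i]? =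
        l₁[i]?.bind fun a => l₂[i]?.bind fun b => l₃[i]?.map (f a b) := by
  intro l₁
  induction l₁ with
  | nil => intro l₂ l₃ i; simp [List.zipWith3]
  | cons a t ih =>
    intro l₂ l₃ i
    cases l₂ with
    | nil => simp [List.zipWith3]
    | cons b t₂ =>
      cases l₃ with
      | nil => simp [List.zipWith3]
      | cons c t₃ =>
        cases i with
        | zero => simp [List.zipWith3]
        | succ n =>
          have hz : List.zipWith3 f (a :: t) (b :: t₂) (c :: t₃) =
              f a b c :: List.zipWith3 f t t₂ t₃ := rfl
          rw [hz]
          simp only [List.getElem?_cons_succ]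
          exact ih t₂ t₃ n

section Aux

variable {ι A : Type*} (ℋ : ι → Set (List A))

/-- The vertex set of `G`. -/
abbrev Vtx := {t : ι × List A × List A × List A //
  t.2.1 ∈ ℋ t.1 ∧ t.2.2.1 ∈ ℋ t.1 ∧ t.2.2.2 ∈ ℋ t.1}

open scoped Classical in
/-- Candidate Maltsev polymorphism extracted from an `L`-homomorphism `g`. -/
noncomputable def mkh (g : Vtx ℋ → List A) (a b c : A) : A :=
  if hx : ∃ x : Vtx ℋ, ∃ i : ℕ, x.val.2.1[i]? = some a ∧ x.val.2.2.1[i]? = some b ∧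
      x.val.2.2.2[i]? = some c
  then ((g hx.choose)[hx.choose_spec.choose]?).getD a
  else if b = c then a else if a = b then c else a

variable {ℋ} {g : Vtx ℋ → List A}
variable (hedge : ∀ x y : Vtx ℋ, (Sig x.val.2.1 y.val.2.1 ∩ Sig x.val.2.2.1 y.val.2.2.1 ∩
          Sig x.val.2.2.2 y.val.2.2.2).Nonempty →
        Sig x.val.2.1 y.val.2.1 ∩ Sig x.val.2.2.1 y.val.2.2.1 ∩
          Sig x.val.2.2.2 y.val.2.2.2 ⊆ Sig (g x) (g y))

include hedge in
lemma mkh_eq (x : Vtx ℋ) (i : ℕ) (a b c : A)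
    (h1 : x.val.2.1[i]? = some a) (h2 : x.val.2.2.1[i]? = some b)
    (h3 : x.val.2.2.2[i]? = some c) :
    (g x)[i]? = some (mkh ℋ g a b c) := by
  classical
  have cons : ∀ (y : Vtx ℋ) (j : ℕ), y.val.2.1[j]? = some a → y.val.2.2.1[j]? = some b →
      y.val.2.2.2[j]? = some c → ∃ v, (g x)[i]? = some v ∧ (g y)[j]? = some v := by
    intro y j k1 k2 k3
    have hmem : ((i, j) : ℕ × ℕ) ∈ Sig x.val.2.1 y.val.2.1 ∩ Sig x.val.2.2.1 y.val.2.2.1 ∩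
        Sig x.val.2.2.2 y.val.2.2.2 := ⟨⟨⟨a, h1, k1⟩, ⟨b, h2, k2⟩⟩, ⟨c, h3, k3⟩⟩
    exact hedge x y ⟨_, hmem⟩ hmem
  have hx : ∃ x : Vtx ℋ, ∃ i : ℕ, x.val.2.1[i]? = some a ∧ x.val.2.2.1[i]? = some b ∧
      x.val.2.2.2[i]? = some c := ⟨x, i, h1, h2, h3⟩
  unfold mkh
  rw [dif_pos hx]
  obtain ⟨v, hv1, hv2⟩ := cons hx.choose hx.choose_spec.choose
    hx.choose_spec.choose_spec.1 hx.choose_spec.choose_spec.2.1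
    hx.choose_spec.choose_spec.2.2
  rw [hv1, hv2, Option.getD_some]

variable (hg : ∀ x : Vtx ℋ, MaltsevListCond x.val.2.1 x.val.2.2.1 x.val.2.2.2 (g x))

include hg in
lemma mkh_id1 (a b : A) : mkh ℋ g a b b = a := by
  classical
  unfold mkh
  by_cases hx : ∃ x : Vtx ℋ, ∃ i : ℕ, x.val.2.1[i]? = some a ∧ x.val.2.2.1[i]? = some b ∧
      x.val.2.2.2[i]? = some b
  · rw [dif_pos hx]
    obtain ⟨s1, s2, s3⟩ := hx.choose_spec.choose_spec
    have := (hg hx.choose).2.2 hx.choose_spec.choose (s2.trans s3.symm)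
    rw [this, s1, Option.getD_some]
  · rw [dif_neg hx, if_pos rfl]

include hg in
lemma mkh_id2 (a b : A) : mkh ℋ g b b a = a := by
  classical
  unfold mkh
  by_cases hx : ∃ x : Vtx ℋ, ∃ i : ℕ, x.val.2.1[i]? = some b ∧ x.val.2.2.1[i]? = some b ∧
      x.val.2.2.2[i]? = some a
  · rw [dif_pos hx]
    obtain ⟨s1, s2, s3⟩ := hx.choose_spec.choose_spec
    have := (hg hx.choose).2.1 hx.choose_spec.choose (s1.trans s2.symm)
    rw [this, s3, Option.getD_some]
  · rw [dif_neg hx]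
    split_ifs with h1 h2 <;> simp_all

end Aux

/-- for a hypergraph `ℋ` partitioned into uniform parts `ℋ l`,
`ℋ` admits a Maltsev polymorphism iff the Maltsev-recognition instance `(G, H, L)`
admits an `L`-homomorphism.  Vertices of `G` are triples `(α,β,γ)` of hyperedges of a
common part `ℋ l`; `g` must send such a triple to some `τ ∈ ℋ l` satisfying the list
conditions, and whenever two triples are adjacent (the intersection of the three
signatures is nonempty) the images must be adjacent in `H` (that intersection is
contained in the signature of the images). -/
theorem maltsev_recognition_correct {ι A : Type*} (ℋ : ι → Set (List A))
    (huniform : ∀ l, ∀ τ ∈ ℋ l, ∀ τ' ∈ ℋ l, τ.length = τ'.length) :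
    (∃ h : A → A → A → A, (∀ a b : A, h a b b = a ∧ h b b a = a) ∧
      ∀ l, ∀ τ₁ ∈ ℋ l, ∀ τ₂ ∈ ℋ l, ∀ τ₃ ∈ ℋ l, List.zipWith3 h τ₁ τ₂ τ₃ ∈ ℋ l) ↔
    (∃ g : (x : {t : ι × List A × List A × List A //
          t.2.1 ∈ ℋ t.1 ∧ t.2.2.1 ∈ ℋ t.1 ∧ t.2.2.2 ∈ ℋ t.1}) → List A,
      (∀ x, g x ∈ ℋ x.val.1 ∧ MaltsevListCond x.val.2.1 x.val.2.2.1 x.val.2.2.2 (g x)) ∧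
      (∀ x y, (Sig x.val.2.1 y.val.2.1 ∩ Sig x.val.2.2.1 y.val.2.2.1 ∩
          Sig x.val.2.2.2 y.val.2.2.2).Nonempty →
        Sig x.val.2.1 y.val.2.1 ∩ Sig x.val.2.2.1 y.val.2.2.1 ∩
          Sig x.val.2.2.2 y.val.2.2.2 ⊆ Sig (g x) (g y))) := by
  constructor
  · rintro ⟨h, hid, hMal⟩
    refine ⟨fun x => List.zipWith3 h x.val.2.1 x.val.2.2.1 x.val.2.2.2, fun x => ?_, ?_⟩
    · obtain ⟨⟨l, α, β, γ⟩, hα, hβ, hγ⟩ := x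
      dsimp only at hα hβ hγ ⊢
      refine ⟨hMal l α hα β hβ γ hγ, ?_, ?_, ?_⟩
      · intro i a ha hb hc
        rw [zipWith3_getElem?, ha, hb, hc]
        simp [(hid a a).1]
      · -- (ii)
        intro i hab
        have hlen : α.length = γ.length := huniform l α hα γ hγ
        rcases hcg : γ[i]? with _ | c
        · have hn : α[i]? = none := by
            rw [List.getElem?_eq_none_iff] at hcg ⊢; omega
          rw [zipWith3_getElem?, hn]; simp
        · have hic : i < γ.length := by
            by_contra hcon
            rw [List.getElem?_eq_none_iff.2 (le_of_not_gt hcon)] at hcg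
            exact absurd hcg (by simp)
          obtain ⟨a, ha⟩ : ∃ v, α[i]? = some v :=
            ⟨_, List.getElem?_eq_getElem (by omega)⟩
          have hb : β[i]? = some a := by rw [← hab]; exact ha
          rw [zipWith3_getElem?, ha, hb, hcg]
          simp [(hid c a).2]
      · -- (iii)
        intro i hbc
        have hlen : α.length = β.length := huniform l α hα β hβ
        rcases hca : α[i]? with _ | a
        · rw [zipWith3_getElem?, hca]; simp
        · have hia : i < α.length := by
            by_contra hcon
            rw [List.getElem?_eq_none_iff.2 (le_of_not_gt hcon)] at hca
            exact absurd hca (by simp)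
          obtain ⟨b, hb⟩ : ∃ v, β[i]? = some v :=
            ⟨_, List.getElem?_eq_getElem (by omega)⟩
          have hc : γ[i]? = some b := by rw [← hbc]; exact hb
          rw [zipWith3_getElem?, hca, hb, hc]
          simp [(hid a b).1]
    · rintro x y - ⟨i, j⟩ ⟨⟨⟨a, ha, ha'⟩, ⟨b, hb, hb'⟩⟩, ⟨c, hc, hc'⟩⟩
      refine ⟨h a b c, ?_, ?_⟩
      · show (List.zipWith3 h x.val.2.1 x.val.2.2.1 x.val.2.2.2)[i]? = _
        rw [zipWith3_getElem?, ha, hb, hc]; rfl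
      · show (List.zipWith3 h y.val.2.1 y.val.2.2.1 y.val.2.2.2)[j]? = _
        rw [zipWith3_getElem?, ha', hb', hc']; rfl
  · rintro ⟨g, hg, hedge⟩
    have hg' : ∀ x : Vtx ℋ, MaltsevListCond x.val.2.1 x.val.2.2.1 x.val.2.2.2 (g x) :=
      fun x => (hg x).2
    refine ⟨mkh ℋ g, fun a b => ⟨mkh_id1 hg' a b, mkh_id2 hg' a b⟩, ?_⟩
    intro l τ₁ h₁ τ₂ h₂ τ₃ h₃
    have hx : (l, τ₁, τ₂, τ₃).2.1 ∈ ℋ (l, τ₁, τ₂, τ₃).1 ∧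
        (l, τ₁, τ₂, τ₃).2.2.1 ∈ ℋ (l, τ₁, τ₂, τ₃).1 ∧
        (l, τ₁, τ₂, τ₃).2.2.2 ∈ ℋ (l, τ₁, τ₂, τ₃).1 := ⟨h₁, h₂, h₃⟩
    set x : Vtx ℋ := ⟨(l, τ₁, τ₂, τ₃), hx⟩ with hxdef
    have hteq : List.zipWith3 (mkh ℋ g) τ₁ τ₂ τ₃ = g x := by
      have hl2 : τ₂.length = τ₁.length := huniform l τ₂ h₂ τ₁ h₁
      have hl3 : τ₃.length = τ₁.length := huniform l τ₃ h₃ τ₁ h₁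
      have hlg : (g x).length = τ₁.length := huniform l (g x) (hg x).1 τ₁ h₁
      apply List.ext_getElem?
      intro i
      by_cases hi : i < τ₁.length
      · obtain ⟨v₁, e1⟩ : ∃ v, τ₁[i]? = some v := ⟨_, List.getElem?_eq_getElem hi⟩
        obtain ⟨v₂, e2⟩ : ∃ v, τ₂[i]? = some v :=
          ⟨_, List.getElem?_eq_getElem (show i < τ₂.length by omega)⟩
        obtain ⟨v₃, e3⟩ : ∃ v, τ₃[i]? = some v :=
          ⟨_, List.getElem?_eq_getElem (show i < τ₃.length by omega)⟩
        rw [zipWith3_getElem?, e1, e2, e3, mkh_eq hedge x i v₁ v₂ v₃ e1 e2 e3]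
        rfl
      · rw [zipWith3_getElem?,
          show τ₁[i]? = none from List.getElem?_eq_none_iff.2 (by omega),
          show (g x)[i]? = none from List.getElem?_eq_none_iff.2 (by omega)]
        rfl
    rw [hteq]
    exact (hg x).1
end

section
/- There exist digraphs G, H and lists L satisfying the rectangle property for all pairs and all pair lists, yet admitting no Maltsev list polymorphism on G ×_L H^3. (Example 2 of the paper gives G on 4 vertices and H on 11 vertices witnessing this.) -/
namespace Ex2

def AGb : Fin 4 → Fin 4 → Bool := fun x y =>
  (x.val == 0 || x.val == 2) && (y.val == 1 || y.val == 3)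

def AG' : Fin 4 → Fin 4 → Prop := fun x y => AGb x y = true

def AHb : Fin 11 → Fin 11 → Bool := fun a b =>
  (a.val == 0 && b.val == 2) || (a.val == 0 && b.val == 3) || (a.val == 1 && b.val == 4) || (a.val == 5 && b.val == 2) || (a.val == 6 && b.val == 3) || (a.val == 6 && b.val == 4) || (a.val == 0 && b.val == 7) || (a.val == 1 && b.val == 8) || (a.val == 5 && b.val == 7) || (a.val == 6 && b.val == 8)

def AH' : Fin 11 → Fin 11 → Prop := fun a b => AHb a b = true

def Lb : Fin 4 → Fin 11 → Bool := fun x a =>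
  (x.val == 0 && a.val == 0) || (x.val == 0 && a.val == 1) || (x.val == 1 && a.val == 2) || (x.val == 1 && a.val == 3) || (x.val == 1 && a.val == 4) || (x.val == 2 && a.val == 5) || (x.val == 2 && a.val == 6) || (x.val == 3 && a.val == 7) || (x.val == 3 && a.val == 8)

def L' : Fin 4 → Set (Fin 11) := fun x => {a | Lb x a = true}

def fI : Fin 11 → ℕ := fun a => [0,1,0,2,1,0,1,0,1,3,3].getD a.val 3

def Nb : Fin 4 → Fin 4 → Fin 11 → Fin 11 → Bool := fun x y a b =>
  Lb x a && Lb y b && (fI a == fI b) && (fI a).blt 2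

set_option maxHeartbeats 1600000

lemma N_diag : ∀ (x : Fin 4) (a b : Fin 11), Nb x x a b = true → a = b := by decide

lemma N_memL : ∀ (x y : Fin 4) (a b : Fin 11), Nb x y a b = true → Lb x a = true := by decide

lemma N_memR : ∀ (x y : Fin 4) (a b : Fin 11), Nb x y a b = true → Lb y b = true := by decide

lemma step_fwd : ∀ (x u v : Fin 4) (a b : Fin 11), AGb u v = true → Nb x v a b = true →
    ∃ c, Nb x u a c = true ∧ AHb c b = true := by decide

lemma step_bwd : ∀ (x u v : Fin 4) (a b : Fin 11), AGb u v = true → Nb x u a b = true →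
    ∃ c, Nb x v a c = true ∧ AHb b c = true := by decide

lemma N_rect : ∀ (x y : Fin 4) (a b c d : Fin 11), Nb x y a c = true → Nb x y b c = true →
    Nb x y b d = true → Nb x y a d = true := by decide

lemma no_common : ∀ u : Fin 11, AHb 1 u = true → AHb 5 u = true → False := by decide

theorem liftN : ∀ (ℓ : ℕ), 1 ≤ ℓ → ∀ (ε : ℕ → Bool) (w : ℕ → Fin 4), IsWalkOn AG' ℓ ε w →
    ∀ a b : Fin 11, Nb (w 0) (w (ℓ - 1)) a b = true →
    ∃ p : ℕ → Fin 11, IsWalkOn AH' ℓ ε p ∧ (∀ i, i < ℓ → p i ∈ L' (w i)) ∧ p 0 = a ∧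
      p (ℓ - 1) = b := by
  intro ℓ
  induction ℓ with
  | zero => intro h; omega
  | succ n ih =>
    intro _ ε w hw a b hN
    rcases Nat.eq_zero_or_pos n with hn | hn
    · subst hn
      have hd : a = b := N_diag _ _ _ hN
      subst hd
      refine ⟨fun _ => a, ?_, ?_, rfl, rfl⟩
      · intro i hi; exact absurd hi (by omega)
      · intro i hi
        have hi0 : i = 0 := by omega
        subst hi0
        exact N_memL _ _ _ _ hN
    · have hw' : IsWalkOn AG' n ε w := fun i hi => hw i (by omega)
      have hlast := hw (n - 1) (by omega)
      have hidx : n - 1 + 1 = n := by omega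
      rw [hidx] at hlast
      have hNn : Nb (w 0) (w n) a b = true := by
        have h2 : n + 1 - 1 = n := by omega
        rwa [h2] at hN
      by_cases hε : ε (n - 1) = true
      · rw [if_pos hε] at hlast
        obtain ⟨c, hc1, hc2⟩ := step_fwd (w 0) (w (n - 1)) (w n) a b hlast hNn
        obtain ⟨p, hp, hm, hp0, hpe⟩ := ih hn ε w hw' a c hc1
        refine ⟨fun i => if i = n then b else p i, ?_, ?_, ?_, ?_⟩
        · intro i hi
          by_cases hin : i + 1 = n
          · show if ε i then AH' (if i = n then b else p i) (if i + 1 = n then b else p (i + 1))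
              else AH' (if i + 1 = n then b else p (i + 1)) (if i = n then b else p i)
            rw [if_pos hin, if_neg (show ¬ i = n by omega)]
            have hεi : ε i = true := by rw [show i = n - 1 by omega]; exact hε
            rw [if_pos hεi]
            rw [show i = n - 1 by omega, hpe]
            exact hc2
          · show if ε i then AH' (if i = n then b else p i) (if i + 1 = n then b else p (i + 1))
              else AH' (if i + 1 = n then b else p (i + 1)) (if i = n then b else p i)
            rw [if_neg hin, if_neg (show ¬ i = n by omega)]
            exact hp i (by omega)
        · intro i hi
          show (if i = n then b else p i) ∈ L' (w i)
          by_cases hin : i = n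
          · rw [if_pos hin, hin]
            exact N_memR _ _ _ _ hNn
          · rw [if_neg hin]
            exact hm i (by omega)
        · show (if 0 = n then b else p 0) = a
          rw [if_neg (show ¬ (0 : ℕ) = n by omega)]
          exact hp0
        · show (if n + 1 - 1 = n then b else p (n + 1 - 1)) = b
          rw [if_pos (show n + 1 - 1 = n by omega)]
      · rw [if_neg hε] at hlast
        obtain ⟨c, hc1, hc2⟩ := step_bwd (w 0) (w n) (w (n - 1)) a b hlast hNn
        obtain ⟨p, hp, hm, hp0, hpe⟩ := ih hn ε w hw' a c hc1
        refine ⟨fun i => if i = n then b else p i, ?_, ?_, ?_, ?_⟩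
        · intro i hi
          by_cases hin : i + 1 = n
          · show if ε i then AH' (if i = n then b else p i) (if i + 1 = n then b else p (i + 1))
              else AH' (if i + 1 = n then b else p (i + 1)) (if i = n then b else p i)
            rw [if_pos hin, if_neg (show ¬ i = n by omega)]
            have hεi : ¬ ε i = true := by rw [show i = n - 1 by omega]; exact hε
            rw [if_neg hεi]
            rw [show i = n - 1 by omega, hpe]
            exact hc2
          · show if ε i then AH' (if i = n then b else p i) (if i + 1 = n then b else p (i + 1))
              else AH' (if i + 1 = n then b else p (i + 1)) (if i = n then b else p i)
            rw [if_neg hin, if_neg (show ¬ i = n by omega)]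
            exact hp i (by omega)
        · intro i hi
          show (if i = n then b else p i) ∈ L' (w i)
          by_cases hin : i = n
          · rw [if_pos hin, hin]
            exact N_memR _ _ _ _ hNn
          · rw [if_neg hin]
            exact hm i (by omega)
        · show (if 0 = n then b else p 0) = a
          rw [if_neg (show ¬ (0 : ℕ) = n by omega)]
          exact hp0
        · show (if n + 1 - 1 = n then b else p (n + 1 - 1)) = b
          rw [if_pos (show n + 1 - 1 = n by omega)]

theorem InPairList_of_N (x y : Fin 4) (a b : Fin 11) (h : Nb x y a b = true) :
    InPairList AG' AH' L' x y a b := by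
  intro ℓ ε w h1 hw h0 he
  exact liftN ℓ h1 ε w hw a b (by rw [h0, he]; exact h)

lemma aux_0_0 : ∀ (a : Fin 11),
    (Lb 0 a = true) →
    Nb 0 0 a a = true := by decide

lemma extract_0_0 (a c : Fin 11) (h : InPairList AG' AH' L' 0 0 a c) : Nb 0 0 a c = true := by
  obtain ⟨p0, hwk0, hm0, h00, he0⟩ := h 1 (fun i => (([] : List Bool)).getD i true)
    (fun i => (([0] : List (Fin 4))).getD i 0) (by omega)
    (by intro i hi; exact absurd hi (by omega)) (by decide) (by decide)
  have hee0 : p0 0 = c := he0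
  have hac : a = c := by rw [← h00]; exact hee0
  subst hac
  have m0_0 : Lb 0 (p0 0) = true := hm0 0 (by omega)
  rw [h00] at m0_0
  exact aux_0_0 a m0_0

lemma aux_0_1 : ∀ (a c q11 q12 : Fin 11),
    (AHb a c = true ∧ AHb a q11 = true ∧ AHb q12 q11 = true ∧ AHb q12 c = true ∧ Lb 0 a = true ∧ Lb 1 c = true ∧ Lb 3 q11 = true ∧ Lb 2 q12 = true) →
    Nb 0 1 a c = true := by decide

lemma extract_0_1 (a c : Fin 11) (h : InPairList AG' AH' L' 0 1 a c) : Nb 0 1 a c = true := by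
  obtain ⟨p0, hwk0, hm0, h00, he0⟩ := h 2 (fun i => (([true] : List Bool)).getD i true)
    (fun i => (([0, 1] : List (Fin 4))).getD i 0) (by omega)
    (by
      intro i hi
      have hi2 : i < 1 := by omega
      interval_cases i
      · exact (by decide : AGb 0 1 = true)) (by decide) (by decide)
  have hee0 : p0 1 = c := he0
  have e0_0 : AH' (p0 0) (p0 1) := hwk0 0 (by omega)
  have m0_0 : Lb 0 (p0 0) = true := hm0 0 (by omega)
  have m0_1 : Lb 1 (p0 1) = true := hm0 1 (by omega)
  rw [h00, hee0] at e0_0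
  rw [h00] at m0_0
  rw [hee0] at m0_1
  obtain ⟨p1, hwk1, hm1, h01, he1⟩ := h 4 (fun i => (([true, false, true] : List Bool)).getD i true)
    (fun i => (([0, 3, 2, 1] : List (Fin 4))).getD i 0) (by omega)
    (by
      intro i hi
      have hi2 : i < 3 := by omega
      interval_cases i
      · exact (by decide : AGb 0 3 = true)
      · exact (by decide : AGb 2 3 = true)
      · exact (by decide : AGb 2 1 = true)) (by decide) (by decide)
  have hee1 : p1 3 = c := he1
  have e1_0 : AH' (p1 0) (p1 1) := hwk1 0 (by omega)
  have e1_1 : AH' (p1 2) (p1 1) := hwk1 1 (by omega)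
  have e1_2 : AH' (p1 2) (p1 3) := hwk1 2 (by omega)
  have m1_0 : Lb 0 (p1 0) = true := hm1 0 (by omega)
  have m1_1 : Lb 3 (p1 1) = true := hm1 1 (by omega)
  have m1_2 : Lb 2 (p1 2) = true := hm1 2 (by omega)
  have m1_3 : Lb 1 (p1 3) = true := hm1 3 (by omega)
  rw [h01] at e1_0
  rw [hee1] at e1_2
  rw [h01] at m1_0
  rw [hee1] at m1_3
  exact aux_0_1 a c (p1 1) (p1 2) ⟨e0_0, e1_0, e1_1, e1_2, m0_0, m0_1, m1_1, m1_2⟩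

lemma aux_0_2 : ∀ (a c q01 : Fin 11),
    (AHb a q01 = true ∧ AHb c q01 = true ∧ Lb 0 a = true ∧ Lb 3 q01 = true ∧ Lb 2 c = true) →
    Nb 0 2 a c = true := by decide

lemma extract_0_2 (a c : Fin 11) (h : InPairList AG' AH' L' 0 2 a c) : Nb 0 2 a c = true := by
  obtain ⟨p0, hwk0, hm0, h00, he0⟩ := h 3 (fun i => (([true, false] : List Bool)).getD i true)
    (fun i => (([0, 3, 2] : List (Fin 4))).getD i 0) (by omega)
    (by
      intro i hi
      have hi2 : i < 2 := by omega
      interval_cases i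
      · exact (by decide : AGb 0 3 = true)
      · exact (by decide : AGb 2 3 = true)) (by decide) (by decide)
  have hee0 : p0 2 = c := he0
  have e0_0 : AH' (p0 0) (p0 1) := hwk0 0 (by omega)
  have e0_1 : AH' (p0 2) (p0 1) := hwk0 1 (by omega)
  have m0_0 : Lb 0 (p0 0) = true := hm0 0 (by omega)
  have m0_1 : Lb 3 (p0 1) = true := hm0 1 (by omega)
  have m0_2 : Lb 2 (p0 2) = true := hm0 2 (by omega)
  rw [h00] at e0_0
  rw [hee0] at e0_1
  rw [h00] at m0_0
  rw [hee0] at m0_2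
  exact aux_0_2 a c (p0 1) ⟨e0_0, e0_1, m0_0, m0_1, m0_2⟩

lemma aux_0_3 : ∀ (a c : Fin 11),
    (AHb a c = true ∧ Lb 0 a = true ∧ Lb 3 c = true) →
    Nb 0 3 a c = true := by decide

lemma extract_0_3 (a c : Fin 11) (h : InPairList AG' AH' L' 0 3 a c) : Nb 0 3 a c = true := by
  obtain ⟨p0, hwk0, hm0, h00, he0⟩ := h 2 (fun i => (([true] : List Bool)).getD i true)
    (fun i => (([0, 3] : List (Fin 4))).getD i 0) (by omega)
    (by
      intro i hi
      have hi2 : i < 1 := by omega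
      interval_cases i
      · exact (by decide : AGb 0 3 = true)) (by decide) (by decide)
  have hee0 : p0 1 = c := he0
  have e0_0 : AH' (p0 0) (p0 1) := hwk0 0 (by omega)
  have m0_0 : Lb 0 (p0 0) = true := hm0 0 (by omega)
  have m0_1 : Lb 3 (p0 1) = true := hm0 1 (by omega)
  rw [h00, hee0] at e0_0
  rw [h00] at m0_0
  rw [hee0] at m0_1
  exact aux_0_3 a c ⟨e0_0, m0_0, m0_1⟩

lemma aux_1_0 : ∀ (a c q11 q12 : Fin 11),
    (AHb c a = true ∧ AHb q11 a = true ∧ AHb q11 q12 = true ∧ AHb c q12 = true ∧ Lb 1 a = true ∧ Lb 0 c = true ∧ Lb 2 q11 = true ∧ Lb 3 q12 = true) →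
    Nb 1 0 a c = true := by decide

lemma extract_1_0 (a c : Fin 11) (h : InPairList AG' AH' L' 1 0 a c) : Nb 1 0 a c = true := by
  obtain ⟨p0, hwk0, hm0, h00, he0⟩ := h 2 (fun i => (([false] : List Bool)).getD i true)
    (fun i => (([1, 0] : List (Fin 4))).getD i 0) (by omega)
    (by
      intro i hi
      have hi2 : i < 1 := by omega
      interval_cases i
      · exact (by decide : AGb 0 1 = true)) (by decide) (by decide)
  have hee0 : p0 1 = c := he0
  have e0_0 : AH' (p0 1) (p0 0) := hwk0 0 (by omega)
  have m0_0 : Lb 1 (p0 0) = true := hm0 0 (by omega)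
  have m0_1 : Lb 0 (p0 1) = true := hm0 1 (by omega)
  rw [h00, hee0] at e0_0
  rw [h00] at m0_0
  rw [hee0] at m0_1
  obtain ⟨p1, hwk1, hm1, h01, he1⟩ := h 4 (fun i => (([false, true, false] : List Bool)).getD i true)
    (fun i => (([1, 2, 3, 0] : List (Fin 4))).getD i 0) (by omega)
    (by
      intro i hi
      have hi2 : i < 3 := by omega
      interval_cases i
      · exact (by decide : AGb 2 1 = true)
      · exact (by decide : AGb 2 3 = true)
      · exact (by decide : AGb 0 3 = true)) (by decide) (by decide)
  have hee1 : p1 3 = c := he1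
  have e1_0 : AH' (p1 1) (p1 0) := hwk1 0 (by omega)
  have e1_1 : AH' (p1 1) (p1 2) := hwk1 1 (by omega)
  have e1_2 : AH' (p1 3) (p1 2) := hwk1 2 (by omega)
  have m1_0 : Lb 1 (p1 0) = true := hm1 0 (by omega)
  have m1_1 : Lb 2 (p1 1) = true := hm1 1 (by omega)
  have m1_2 : Lb 3 (p1 2) = true := hm1 2 (by omega)
  have m1_3 : Lb 0 (p1 3) = true := hm1 3 (by omega)
  rw [h01] at e1_0
  rw [hee1] at e1_2
  rw [h01] at m1_0
  rw [hee1] at m1_3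
  exact aux_1_0 a c (p1 1) (p1 2) ⟨e0_0, e1_0, e1_1, e1_2, m0_0, m0_1, m1_1, m1_2⟩

lemma aux_1_1 : ∀ (a q11 q12 q13 : Fin 11),
    (AHb q11 a = true ∧ AHb q11 q12 = true ∧ AHb q13 q12 = true ∧ AHb q13 a = true ∧ Lb 1 a = true ∧ Lb 0 q11 = true ∧ Lb 3 q12 = true ∧ Lb 2 q13 = true) →
    Nb 1 1 a a = true := by decide

lemma extract_1_1 (a c : Fin 11) (h : InPairList AG' AH' L' 1 1 a c) : Nb 1 1 a c = true := by
  obtain ⟨p0, hwk0, hm0, h00, he0⟩ := h 1 (fun i => (([] : List Bool)).getD i true)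
    (fun i => (([1] : List (Fin 4))).getD i 0) (by omega)
    (by intro i hi; exact absurd hi (by omega)) (by decide) (by decide)
  have hee0 : p0 0 = c := he0
  have hac : a = c := by rw [← h00]; exact hee0
  subst hac
  have m0_0 : Lb 1 (p0 0) = true := hm0 0 (by omega)
  rw [h00] at m0_0
  obtain ⟨p1, hwk1, hm1, h01, he1⟩ := h 5 (fun i => (([false, true, false, true] : List Bool)).getD i true)
    (fun i => (([1, 0, 3, 2, 1] : List (Fin 4))).getD i 0) (by omega)
    (by
      intro i hi
      have hi2 : i < 4 := by omega
      interval_cases i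
      · exact (by decide : AGb 0 1 = true)
      · exact (by decide : AGb 0 3 = true)
      · exact (by decide : AGb 2 3 = true)
      · exact (by decide : AGb 2 1 = true)) (by decide) (by decide)
  have hee1 : p1 4 = a := he1
  have e1_0 : AH' (p1 1) (p1 0) := hwk1 0 (by omega)
  have e1_1 : AH' (p1 1) (p1 2) := hwk1 1 (by omega)
  have e1_2 : AH' (p1 3) (p1 2) := hwk1 2 (by omega)
  have e1_3 : AH' (p1 3) (p1 4) := hwk1 3 (by omega)
  have m1_0 : Lb 1 (p1 0) = true := hm1 0 (by omega)
  have m1_1 : Lb 0 (p1 1) = true := hm1 1 (by omega)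
  have m1_2 : Lb 3 (p1 2) = true := hm1 2 (by omega)
  have m1_3 : Lb 2 (p1 3) = true := hm1 3 (by omega)
  have m1_4 : Lb 1 (p1 4) = true := hm1 4 (by omega)
  rw [h01] at e1_0
  rw [hee1] at e1_3
  rw [h01] at m1_0
  rw [hee1] at m1_4
  exact aux_1_1 a (p1 1) (p1 2) (p1 3) ⟨e1_0, e1_1, e1_2, e1_3, m0_0, m1_1, m1_2, m1_3⟩

lemma aux_1_2 : ∀ (a c q11 q12 : Fin 11),
    (AHb c a = true ∧ AHb q11 a = true ∧ AHb q11 q12 = true ∧ AHb c q12 = true ∧ Lb 1 a = true ∧ Lb 2 c = true ∧ Lb 0 q11 = true ∧ Lb 3 q12 = true) →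
    Nb 1 2 a c = true := by decide

lemma extract_1_2 (a c : Fin 11) (h : InPairList AG' AH' L' 1 2 a c) : Nb 1 2 a c = true := by
  obtain ⟨p0, hwk0, hm0, h00, he0⟩ := h 2 (fun i => (([false] : List Bool)).getD i true)
    (fun i => (([1, 2] : List (Fin 4))).getD i 0) (by omega)
    (by
      intro i hi
      have hi2 : i < 1 := by omega
      interval_cases i
      · exact (by decide : AGb 2 1 = true)) (by decide) (by decide)
  have hee0 : p0 1 = c := he0
  have e0_0 : AH' (p0 1) (p0 0) := hwk0 0 (by omega)
  have m0_0 : Lb 1 (p0 0) = true := hm0 0 (by omega)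
  have m0_1 : Lb 2 (p0 1) = true := hm0 1 (by omega)
  rw [h00, hee0] at e0_0
  rw [h00] at m0_0
  rw [hee0] at m0_1
  obtain ⟨p1, hwk1, hm1, h01, he1⟩ := h 4 (fun i => (([false, true, false] : List Bool)).getD i true)
    (fun i => (([1, 0, 3, 2] : List (Fin 4))).getD i 0) (by omega)
    (by
      intro i hi
      have hi2 : i < 3 := by omega
      interval_cases i
      · exact (by decide : AGb 0 1 = true)
      · exact (by decide : AGb 0 3 = true)
      · exact (by decide : AGb 2 3 = true)) (by decide) (by decide)
  have hee1 : p1 3 = c := he1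
  have e1_0 : AH' (p1 1) (p1 0) := hwk1 0 (by omega)
  have e1_1 : AH' (p1 1) (p1 2) := hwk1 1 (by omega)
  have e1_2 : AH' (p1 3) (p1 2) := hwk1 2 (by omega)
  have m1_0 : Lb 1 (p1 0) = true := hm1 0 (by omega)
  have m1_1 : Lb 0 (p1 1) = true := hm1 1 (by omega)
  have m1_2 : Lb 3 (p1 2) = true := hm1 2 (by omega)
  have m1_3 : Lb 2 (p1 3) = true := hm1 3 (by omega)
  rw [h01] at e1_0
  rw [hee1] at e1_2
  rw [h01] at m1_0
  rw [hee1] at m1_3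
  exact aux_1_2 a c (p1 1) (p1 2) ⟨e0_0, e1_0, e1_1, e1_2, m0_0, m0_1, m1_1, m1_2⟩

lemma aux_1_3 : ∀ (a c q01 q11 : Fin 11),
    (AHb q01 a = true ∧ AHb q01 c = true ∧ AHb q11 a = true ∧ AHb q11 c = true ∧ Lb 1 a = true ∧ Lb 0 q01 = true ∧ Lb 3 c = true ∧ Lb 2 q11 = true) →
    Nb 1 3 a c = true := by decide

lemma extract_1_3 (a c : Fin 11) (h : InPairList AG' AH' L' 1 3 a c) : Nb 1 3 a c = true := by
  obtain ⟨p0, hwk0, hm0, h00, he0⟩ := h 3 (fun i => (([false, true] : List Bool)).getD i true)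
    (fun i => (([1, 0, 3] : List (Fin 4))).getD i 0) (by omega)
    (by
      intro i hi
      have hi2 : i < 2 := by omega
      interval_cases i
      · exact (by decide : AGb 0 1 = true)
      · exact (by decide : AGb 0 3 = true)) (by decide) (by decide)
  have hee0 : p0 2 = c := he0
  have e0_0 : AH' (p0 1) (p0 0) := hwk0 0 (by omega)
  have e0_1 : AH' (p0 1) (p0 2) := hwk0 1 (by omega)
  have m0_0 : Lb 1 (p0 0) = true := hm0 0 (by omega)
  have m0_1 : Lb 0 (p0 1) = true := hm0 1 (by omega)
  have m0_2 : Lb 3 (p0 2) = true := hm0 2 (by omega)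
  rw [h00] at e0_0
  rw [hee0] at e0_1
  rw [h00] at m0_0
  rw [hee0] at m0_2
  obtain ⟨p1, hwk1, hm1, h01, he1⟩ := h 3 (fun i => (([false, true] : List Bool)).getD i true)
    (fun i => (([1, 2, 3] : List (Fin 4))).getD i 0) (by omega)
    (by
      intro i hi
      have hi2 : i < 2 := by omega
      interval_cases i
      · exact (by decide : AGb 2 1 = true)
      · exact (by decide : AGb 2 3 = true)) (by decide) (by decide)
  have hee1 : p1 2 = c := he1
  have e1_0 : AH' (p1 1) (p1 0) := hwk1 0 (by omega)
  have e1_1 : AH' (p1 1) (p1 2) := hwk1 1 (by omega)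
  have m1_0 : Lb 1 (p1 0) = true := hm1 0 (by omega)
  have m1_1 : Lb 2 (p1 1) = true := hm1 1 (by omega)
  have m1_2 : Lb 3 (p1 2) = true := hm1 2 (by omega)
  rw [h01] at e1_0
  rw [hee1] at e1_1
  rw [h01] at m1_0
  rw [hee1] at m1_2
  exact aux_1_3 a c (p0 1) (p1 1) ⟨e0_0, e0_1, e1_0, e1_1, m0_0, m0_1, m0_2, m1_1⟩

lemma aux_2_0 : ∀ (a c q01 : Fin 11),
    (AHb a q01 = true ∧ AHb c q01 = true ∧ Lb 2 a = true ∧ Lb 3 q01 = true ∧ Lb 0 c = true) →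
    Nb 2 0 a c = true := by decide

lemma extract_2_0 (a c : Fin 11) (h : InPairList AG' AH' L' 2 0 a c) : Nb 2 0 a c = true := by
  obtain ⟨p0, hwk0, hm0, h00, he0⟩ := h 3 (fun i => (([true, false] : List Bool)).getD i true)
    (fun i => (([2, 3, 0] : List (Fin 4))).getD i 0) (by omega)
    (by
      intro i hi
      have hi2 : i < 2 := by omega
      interval_cases i
      · exact (by decide : AGb 2 3 = true)
      · exact (by decide : AGb 0 3 = true)) (by decide) (by decide)
  have hee0 : p0 2 = c := he0
  have e0_0 : AH' (p0 0) (p0 1) := hwk0 0 (by omega)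
  have e0_1 : AH' (p0 2) (p0 1) := hwk0 1 (by omega)
  have m0_0 : Lb 2 (p0 0) = true := hm0 0 (by omega)
  have m0_1 : Lb 3 (p0 1) = true := hm0 1 (by omega)
  have m0_2 : Lb 0 (p0 2) = true := hm0 2 (by omega)
  rw [h00] at e0_0
  rw [hee0] at e0_1
  rw [h00] at m0_0
  rw [hee0] at m0_2
  exact aux_2_0 a c (p0 1) ⟨e0_0, e0_1, m0_0, m0_1, m0_2⟩

lemma aux_2_1 : ∀ (a c q11 q12 : Fin 11),
    (AHb a c = true ∧ AHb a q11 = true ∧ AHb q12 q11 = true ∧ AHb q12 c = true ∧ Lb 2 a = true ∧ Lb 1 c = true ∧ Lb 3 q11 = true ∧ Lb 0 q12 = true) →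
    Nb 2 1 a c = true := by decide

lemma extract_2_1 (a c : Fin 11) (h : InPairList AG' AH' L' 2 1 a c) : Nb 2 1 a c = true := by
  obtain ⟨p0, hwk0, hm0, h00, he0⟩ := h 2 (fun i => (([true] : List Bool)).getD i true)
    (fun i => (([2, 1] : List (Fin 4))).getD i 0) (by omega)
    (by
      intro i hi
      have hi2 : i < 1 := by omega
      interval_cases i
      · exact (by decide : AGb 2 1 = true)) (by decide) (by decide)
  have hee0 : p0 1 = c := he0
  have e0_0 : AH' (p0 0) (p0 1) := hwk0 0 (by omega)
  have m0_0 : Lb 2 (p0 0) = true := hm0 0 (by omega)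
  have m0_1 : Lb 1 (p0 1) = true := hm0 1 (by omega)
  rw [h00, hee0] at e0_0
  rw [h00] at m0_0
  rw [hee0] at m0_1
  obtain ⟨p1, hwk1, hm1, h01, he1⟩ := h 4 (fun i => (([true, false, true] : List Bool)).getD i true)
    (fun i => (([2, 3, 0, 1] : List (Fin 4))).getD i 0) (by omega)
    (by
      intro i hi
      have hi2 : i < 3 := by omega
      interval_cases i
      · exact (by decide : AGb 2 3 = true)
      · exact (by decide : AGb 0 3 = true)
      · exact (by decide : AGb 0 1 = true)) (by decide) (by decide)
  have hee1 : p1 3 = c := he1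
  have e1_0 : AH' (p1 0) (p1 1) := hwk1 0 (by omega)
  have e1_1 : AH' (p1 2) (p1 1) := hwk1 1 (by omega)
  have e1_2 : AH' (p1 2) (p1 3) := hwk1 2 (by omega)
  have m1_0 : Lb 2 (p1 0) = true := hm1 0 (by omega)
  have m1_1 : Lb 3 (p1 1) = true := hm1 1 (by omega)
  have m1_2 : Lb 0 (p1 2) = true := hm1 2 (by omega)
  have m1_3 : Lb 1 (p1 3) = true := hm1 3 (by omega)
  rw [h01] at e1_0
  rw [hee1] at e1_2
  rw [h01] at m1_0
  rw [hee1] at m1_3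
  exact aux_2_1 a c (p1 1) (p1 2) ⟨e0_0, e1_0, e1_1, e1_2, m0_0, m0_1, m1_1, m1_2⟩

lemma aux_2_2 : ∀ (a : Fin 11),
    (Lb 2 a = true) →
    Nb 2 2 a a = true := by decide

lemma extract_2_2 (a c : Fin 11) (h : InPairList AG' AH' L' 2 2 a c) : Nb 2 2 a c = true := by
  obtain ⟨p0, hwk0, hm0, h00, he0⟩ := h 1 (fun i => (([] : List Bool)).getD i true)
    (fun i => (([2] : List (Fin 4))).getD i 0) (by omega)
    (by intro i hi; exact absurd hi (by omega)) (by decide) (by decide)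
  have hee0 : p0 0 = c := he0
  have hac : a = c := by rw [← h00]; exact hee0
  subst hac
  have m0_0 : Lb 2 (p0 0) = true := hm0 0 (by omega)
  rw [h00] at m0_0
  exact aux_2_2 a m0_0

lemma aux_2_3 : ∀ (a c : Fin 11),
    (AHb a c = true ∧ Lb 2 a = true ∧ Lb 3 c = true) →
    Nb 2 3 a c = true := by decide

lemma extract_2_3 (a c : Fin 11) (h : InPairList AG' AH' L' 2 3 a c) : Nb 2 3 a c = true := by
  obtain ⟨p0, hwk0, hm0, h00, he0⟩ := h 2 (fun i => (([true] : List Bool)).getD i true)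
    (fun i => (([2, 3] : List (Fin 4))).getD i 0) (by omega)
    (by
      intro i hi
      have hi2 : i < 1 := by omega
      interval_cases i
      · exact (by decide : AGb 2 3 = true)) (by decide) (by decide)
  have hee0 : p0 1 = c := he0
  have e0_0 : AH' (p0 0) (p0 1) := hwk0 0 (by omega)
  have m0_0 : Lb 2 (p0 0) = true := hm0 0 (by omega)
  have m0_1 : Lb 3 (p0 1) = true := hm0 1 (by omega)
  rw [h00, hee0] at e0_0
  rw [h00] at m0_0
  rw [hee0] at m0_1
  exact aux_2_3 a c ⟨e0_0, m0_0, m0_1⟩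

lemma aux_3_0 : ∀ (a c : Fin 11),
    (AHb c a = true ∧ Lb 3 a = true ∧ Lb 0 c = true) →
    Nb 3 0 a c = true := by decide

lemma extract_3_0 (a c : Fin 11) (h : InPairList AG' AH' L' 3 0 a c) : Nb 3 0 a c = true := by
  obtain ⟨p0, hwk0, hm0, h00, he0⟩ := h 2 (fun i => (([false] : List Bool)).getD i true)
    (fun i => (([3, 0] : List (Fin 4))).getD i 0) (by omega)
    (by
      intro i hi
      have hi2 : i < 1 := by omega
      interval_cases i
      · exact (by decide : AGb 0 3 = true)) (by decide) (by decide)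
  have hee0 : p0 1 = c := he0
  have e0_0 : AH' (p0 1) (p0 0) := hwk0 0 (by omega)
  have m0_0 : Lb 3 (p0 0) = true := hm0 0 (by omega)
  have m0_1 : Lb 0 (p0 1) = true := hm0 1 (by omega)
  rw [h00, hee0] at e0_0
  rw [h00] at m0_0
  rw [hee0] at m0_1
  exact aux_3_0 a c ⟨e0_0, m0_0, m0_1⟩

lemma aux_3_1 : ∀ (a c q01 q11 : Fin 11),
    (AHb q01 a = true ∧ AHb q01 c = true ∧ AHb q11 a = true ∧ AHb q11 c = true ∧ Lb 3 a = true ∧ Lb 0 q01 = true ∧ Lb 1 c = true ∧ Lb 2 q11 = true) →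
    Nb 3 1 a c = true := by decide

lemma extract_3_1 (a c : Fin 11) (h : InPairList AG' AH' L' 3 1 a c) : Nb 3 1 a c = true := by
  obtain ⟨p0, hwk0, hm0, h00, he0⟩ := h 3 (fun i => (([false, true] : List Bool)).getD i true)
    (fun i => (([3, 0, 1] : List (Fin 4))).getD i 0) (by omega)
    (by
      intro i hi
      have hi2 : i < 2 := by omega
      interval_cases i
      · exact (by decide : AGb 0 3 = true)
      · exact (by decide : AGb 0 1 = true)) (by decide) (by decide)
  have hee0 : p0 2 = c := he0
  have e0_0 : AH' (p0 1) (p0 0) := hwk0 0 (by omega)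
  have e0_1 : AH' (p0 1) (p0 2) := hwk0 1 (by omega)
  have m0_0 : Lb 3 (p0 0) = true := hm0 0 (by omega)
  have m0_1 : Lb 0 (p0 1) = true := hm0 1 (by omega)
  have m0_2 : Lb 1 (p0 2) = true := hm0 2 (by omega)
  rw [h00] at e0_0
  rw [hee0] at e0_1
  rw [h00] at m0_0
  rw [hee0] at m0_2
  obtain ⟨p1, hwk1, hm1, h01, he1⟩ := h 3 (fun i => (([false, true] : List Bool)).getD i true)
    (fun i => (([3, 2, 1] : List (Fin 4))).getD i 0) (by omega)
    (by
      intro i hi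
      have hi2 : i < 2 := by omega
      interval_cases i
      · exact (by decide : AGb 2 3 = true)
      · exact (by decide : AGb 2 1 = true)) (by decide) (by decide)
  have hee1 : p1 2 = c := he1
  have e1_0 : AH' (p1 1) (p1 0) := hwk1 0 (by omega)
  have e1_1 : AH' (p1 1) (p1 2) := hwk1 1 (by omega)
  have m1_0 : Lb 3 (p1 0) = true := hm1 0 (by omega)
  have m1_1 : Lb 2 (p1 1) = true := hm1 1 (by omega)
  have m1_2 : Lb 1 (p1 2) = true := hm1 2 (by omega)
  rw [h01] at e1_0
  rw [hee1] at e1_1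
  rw [h01] at m1_0
  rw [hee1] at m1_2
  exact aux_3_1 a c (p0 1) (p1 1) ⟨e0_0, e0_1, e1_0, e1_1, m0_0, m0_1, m0_2, m1_1⟩

lemma aux_3_2 : ∀ (a c : Fin 11),
    (AHb c a = true ∧ Lb 3 a = true ∧ Lb 2 c = true) →
    Nb 3 2 a c = true := by decide

lemma extract_3_2 (a c : Fin 11) (h : InPairList AG' AH' L' 3 2 a c) : Nb 3 2 a c = true := by
  obtain ⟨p0, hwk0, hm0, h00, he0⟩ := h 2 (fun i => (([false] : List Bool)).getD i true)
    (fun i => (([3, 2] : List (Fin 4))).getD i 0) (by omega)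
    (by
      intro i hi
      have hi2 : i < 1 := by omega
      interval_cases i
      · exact (by decide : AGb 2 3 = true)) (by decide) (by decide)
  have hee0 : p0 1 = c := he0
  have e0_0 : AH' (p0 1) (p0 0) := hwk0 0 (by omega)
  have m0_0 : Lb 3 (p0 0) = true := hm0 0 (by omega)
  have m0_1 : Lb 2 (p0 1) = true := hm0 1 (by omega)
  rw [h00, hee0] at e0_0
  rw [h00] at m0_0
  rw [hee0] at m0_1
  exact aux_3_2 a c ⟨e0_0, m0_0, m0_1⟩

lemma aux_3_3 : ∀ (a : Fin 11),
    (Lb 3 a = true) →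
    Nb 3 3 a a = true := by decide

lemma extract_3_3 (a c : Fin 11) (h : InPairList AG' AH' L' 3 3 a c) : Nb 3 3 a c = true := by
  obtain ⟨p0, hwk0, hm0, h00, he0⟩ := h 1 (fun i => (([] : List Bool)).getD i true)
    (fun i => (([3] : List (Fin 4))).getD i 0) (by omega)
    (by intro i hi; exact absurd hi (by omega)) (by decide) (by decide)
  have hee0 : p0 0 = c := he0
  have hac : a = c := by rw [← h00]; exact hee0
  subst hac
  have m0_0 : Lb 3 (p0 0) = true := hm0 0 (by omega)
  rw [h00] at m0_0
  exact aux_3_3 a m0_0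

end Ex2

/-- there is an instance (with `G` on 4 vertices and `H` on 11 vertices)
whose pair lists satisfy the rectangle property for all pairs, yet which admits no
Maltsev list polymorphism on `G ×_L H³`. -/
theorem exists_rectangular_no_maltsev :
    ∃ (AG : Fin 4 → Fin 4 → Prop) (AH : Fin 11 → Fin 11 → Prop)
      (L : Fin 4 → Set (Fin 11)),
      (∀ (x y : Fin 4) (a b : Fin 11) (c d : Fin 11),
        a ∈ L x → b ∈ L x → c ∈ L y → d ∈ L y →
        InPairList AG AH L x y a c → InPairList AG AH L x y b c →
        InPairList AG AH L x y b d → InPairList AG AH L x y a d) ∧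
      ¬ ∃ h, IsMaltsevListPoly AG AH L h := by
  refine ⟨Ex2.AG', Ex2.AH', Ex2.L', ?_, ?_⟩
  · intro x y a b c d ha hb hc hd h1 h2 h3
    fin_cases x <;> fin_cases y
    · exact Ex2.InPairList_of_N 0 0 a d (Ex2.N_rect 0 0 a b c d (Ex2.extract_0_0 a c h1) (Ex2.extract_0_0 b c h2) (Ex2.extract_0_0 b d h3))
    · exact Ex2.InPairList_of_N 0 1 a d (Ex2.N_rect 0 1 a b c d (Ex2.extract_0_1 a c h1) (Ex2.extract_0_1 b c h2) (Ex2.extract_0_1 b d h3))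
    · exact Ex2.InPairList_of_N 0 2 a d (Ex2.N_rect 0 2 a b c d (Ex2.extract_0_2 a c h1) (Ex2.extract_0_2 b c h2) (Ex2.extract_0_2 b d h3))
    · exact Ex2.InPairList_of_N 0 3 a d (Ex2.N_rect 0 3 a b c d (Ex2.extract_0_3 a c h1) (Ex2.extract_0_3 b c h2) (Ex2.extract_0_3 b d h3))
    · exact Ex2.InPairList_of_N 1 0 a d (Ex2.N_rect 1 0 a b c d (Ex2.extract_1_0 a c h1) (Ex2.extract_1_0 b c h2) (Ex2.extract_1_0 b d h3))
    · exact Ex2.InPairList_of_N 1 1 a d (Ex2.N_rect 1 1 a b c d (Ex2.extract_1_1 a c h1) (Ex2.extract_1_1 b c h2) (Ex2.extract_1_1 b d h3))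
    · exact Ex2.InPairList_of_N 1 2 a d (Ex2.N_rect 1 2 a b c d (Ex2.extract_1_2 a c h1) (Ex2.extract_1_2 b c h2) (Ex2.extract_1_2 b d h3))
    · exact Ex2.InPairList_of_N 1 3 a d (Ex2.N_rect 1 3 a b c d (Ex2.extract_1_3 a c h1) (Ex2.extract_1_3 b c h2) (Ex2.extract_1_3 b d h3))
    · exact Ex2.InPairList_of_N 2 0 a d (Ex2.N_rect 2 0 a b c d (Ex2.extract_2_0 a c h1) (Ex2.extract_2_0 b c h2) (Ex2.extract_2_0 b d h3))
    · exact Ex2.InPairList_of_N 2 1 a d (Ex2.N_rect 2 1 a b c d (Ex2.extract_2_1 a c h1) (Ex2.extract_2_1 b c h2) (Ex2.extract_2_1 b d h3))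
    · exact Ex2.InPairList_of_N 2 2 a d (Ex2.N_rect 2 2 a b c d (Ex2.extract_2_2 a c h1) (Ex2.extract_2_2 b c h2) (Ex2.extract_2_2 b d h3))
    · exact Ex2.InPairList_of_N 2 3 a d (Ex2.N_rect 2 3 a b c d (Ex2.extract_2_3 a c h1) (Ex2.extract_2_3 b c h2) (Ex2.extract_2_3 b d h3))
    · exact Ex2.InPairList_of_N 3 0 a d (Ex2.N_rect 3 0 a b c d (Ex2.extract_3_0 a c h1) (Ex2.extract_3_0 b c h2) (Ex2.extract_3_0 b d h3))
    · exact Ex2.InPairList_of_N 3 1 a d (Ex2.N_rect 3 1 a b c d (Ex2.extract_3_1 a c h1) (Ex2.extract_3_1 b c h2) (Ex2.extract_3_1 b d h3))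
    · exact Ex2.InPairList_of_N 3 2 a d (Ex2.N_rect 3 2 a b c d (Ex2.extract_3_2 a c h1) (Ex2.extract_3_2 b c h2) (Ex2.extract_3_2 b d h3))
    · exact Ex2.InPairList_of_N 3 3 a d (Ex2.N_rect 3 3 a b c d (Ex2.extract_3_3 a c h1) (Ex2.extract_3_3 b c h2) (Ex2.extract_3_3 b d h3))
  · rintro ⟨h, hL, hArc, hMal⟩
    have i1 : h 0 1 0 0 = 1 :=
      (hMal 0 1 0 (by decide : Ex2.Lb 0 1 = true) (by decide : Ex2.Lb 0 0 = true)).1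
    have i2 : h 2 6 6 5 = 5 :=
      (hMal 2 5 6 (by decide : Ex2.Lb 2 5 = true) (by decide : Ex2.Lb 2 6 = true)).2
    have c1 := hArc 0 1 1 0 0 4 3 2 (by decide : Ex2.AGb 0 1 = true)
      (by decide : Ex2.Lb 0 1 = true) (by decide : Ex2.Lb 0 0 = true) (by decide : Ex2.Lb 0 0 = true)
      (by decide : Ex2.Lb 1 4 = true) (by decide : Ex2.Lb 1 3 = true) (by decide : Ex2.Lb 1 2 = true)
      (by decide : Ex2.AHb 1 4 = true) (by decide : Ex2.AHb 0 3 = true) (by decide : Ex2.AHb 0 2 = true)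
    have c2 := hArc 2 1 6 6 5 4 3 2 (by decide : Ex2.AGb 2 1 = true)
      (by decide : Ex2.Lb 2 6 = true) (by decide : Ex2.Lb 2 6 = true) (by decide : Ex2.Lb 2 5 = true)
      (by decide : Ex2.Lb 1 4 = true) (by decide : Ex2.Lb 1 3 = true) (by decide : Ex2.Lb 1 2 = true)
      (by decide : Ex2.AHb 6 4 = true) (by decide : Ex2.AHb 6 3 = true) (by decide : Ex2.AHb 5 2 = true)
    rw [i1] at c1
    rw [i2] at c2
    exact Ex2.no_common _ c1 c2
end

section
/- Let H be a digraph with a Maltsev polymorphism h. For any vertex set partition of a walk situation: if there are directed walks of the same length and pattern from a to c, from b to c, and from b to d in H, then there is a directed walk of the same length and pattern from a to d in H. -/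
/-- in a digraph with a Maltsev polymorphism, if there are walks of the
same length and orientation pattern from `a` to `c`, from `b` to `c`, and from `b` to
`d`, then there is a walk of the same length and pattern from `a` to `d`. -/
theorem maltsev_walks_rectangular {V : Type*} (A : V → V → Prop) (h : V → V → V → V)
    (hhom : ∀ a₁ a₂ a₃ b₁ b₂ b₃ : V, A a₁ b₁ → A a₂ b₂ → A a₃ b₃ →
      A (h a₁ a₂ a₃) (h b₁ b₂ b₃))
    (hmal : ∀ a b : V, h a b b = a ∧ h b b a = a)
    (ℓ : ℕ) (hℓ : 1 ≤ ℓ) (ε : ℕ → Bool) (a b c d : V)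
    (hac : ∃ w, IsWalkOn A ℓ ε w ∧ w 0 = a ∧ w (ℓ - 1) = c)
    (hbc : ∃ w, IsWalkOn A ℓ ε w ∧ w 0 = b ∧ w (ℓ - 1) = c)
    (hbd : ∃ w, IsWalkOn A ℓ ε w ∧ w 0 = b ∧ w (ℓ - 1) = d) :
    ∃ w, IsWalkOn A ℓ ε w ∧ w 0 = a ∧ w (ℓ - 1) = d := by
  obtain ⟨w₁, hw₁, h₁0, h₁e⟩ := hac
  obtain ⟨w₂, hw₂, h₂0, h₂e⟩ := hbc
  obtain ⟨w₃, hw₃, h₃0, h₃e⟩ := hbd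
  refine ⟨fun i => h (w₁ i) (w₂ i) (w₃ i), ?_, ?_, ?_⟩
  · intro i hi
    have := hw₁ i hi
    have := hw₂ i hi
    have := hw₃ i hi
    cases hε : ε i <;> simp_all <;> exact hhom _ _ _ _ _ _ ‹_› ‹_› ‹_›
  · simp only []; rw [h₁0, h₂0, h₃0, (hmal a b).1]
  · simp only []; rw [h₁e, h₂e, h₃e, (hmal d c).2]
end

section
/- Let G, H be digraphs, L lists admitting a Maltsev list polymorphism, with arc- and pair-consistent pair lists. For x ∈ V(G) and a ∈ L(x), define L_{x,a}(y) = {d : (a,d) ∈ L(x,y)}. Then for all a, b ∈ L(x) and y, z ∈ V(G): if c ∈ L_{x,a}(y) ∩ L_{x,b}(y) and (c,d) ∈ L_{x,a}(y,z) and (c,d') ∈ L_{x,b}(y,z) for some d, then {e : (c,e) ∈ L_{x,a}(y,z)} and {e : (c,e) ∈ L_{x,b}(y,z)} are either equal or disjoint. -/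
/-- The restricted lists `L_{x,a}`: `d ∈ L_{x,a}(y)` iff `d ∈ L(y)` and
`(a,d) ∈ L(x,y)`. -/
def Lxa {VG VH : Type*} (AG : VG → VG → Prop) (AH : VH → VH → Prop)
    (L : VG → Set VH) (x : VG) (a : VH) : VG → Set VH :=
  fun y => {d ∈ L y | InPairList AG AH L x y a d}

section Aux

variable {VG VH : Type*} {AG : VG → VG → Prop} {AH : VH → VH → Prop}
    {L : VG → Set VH} {h : VG → VH → VH → VH → VH}

/-- Applying the polymorphism pointwise to three congruent list walks gives a list walk. -/
lemma walk_poly (hML : IsMaltsevListPoly AG AH L h)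
    (ℓ : ℕ) (ε : ℕ → Bool) (w : ℕ → VG) (hw : IsWalkOn AG ℓ ε w)
    (p1 p2 p3 : ℕ → VH)
    (h1 : IsWalkOn AH ℓ ε p1) (h2 : IsWalkOn AH ℓ ε p2) (h3 : IsWalkOn AH ℓ ε p3)
    (m1 : ∀ i, i < ℓ → p1 i ∈ L (w i)) (m2 : ∀ i, i < ℓ → p2 i ∈ L (w i))
    (m3 : ∀ i, i < ℓ → p3 i ∈ L (w i)) :
    IsWalkOn AH ℓ ε (fun i => h (w i) (p1 i) (p2 i) (p3 i)) ∧
    (∀ i, i < ℓ → h (w i) (p1 i) (p2 i) (p3 i) ∈ L (w i)) := by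
  constructor
  · intro i hi
    have hi1 : i < ℓ := by omega
    have hi2 : i + 1 < ℓ := hi
    have hwi := hw i hi
    have hw1 := h1 i hi
    have hw2 := h2 i hi
    have hw3 := h3 i hi
    by_cases hε : ε i
    · simp only [hε, if_true] at *
      exact hML.2.1 _ _ _ _ _ _ _ _ hwi (m1 i hi1) (m2 i hi1) (m3 i hi1)
        (m1 _ hi2) (m2 _ hi2) (m3 _ hi2) hw1 hw2 hw3
    · simp only [hε, if_false] at *
      exact hML.2.1 _ _ _ _ _ _ _ _ hwi (m1 _ hi2) (m2 _ hi2) (m3 _ hi2)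
        (m1 i hi1) (m2 i hi1) (m3 i hi1) hw1 hw2 hw3
  · intro i hi
    exact hML.1 _ _ _ _ (m1 i hi) (m2 i hi) (m3 i hi)

/-- Pair lists are closed under the polymorphism. -/
lemma inPairList_poly (hML : IsMaltsevListPoly AG AH L h)
    (x y : VG) (a1 a2 a3 d1 d2 d3 : VH)
    (h1 : InPairList AG AH L x y a1 d1) (h2 : InPairList AG AH L x y a2 d2)
    (h3 : InPairList AG AH L x y a3 d3) :
    InPairList AG AH L x y (h x a1 a2 a3) (h y d1 d2 d3) := by
  intro ℓ ε w hℓ hw hw0 hwe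
  obtain ⟨q1, q1w, q1m, q10, q1e⟩ := h1 ℓ ε w hℓ hw hw0 hwe
  obtain ⟨q2, q2w, q2m, q20, q2e⟩ := h2 ℓ ε w hℓ hw hw0 hwe
  obtain ⟨q3, q3w, q3m, q30, q3e⟩ := h3 ℓ ε w hℓ hw hw0 hwe
  obtain ⟨Pw, Pm⟩ := walk_poly hML ℓ ε w hw q1 q2 q3 q1w q2w q3w q1m q2m q3m
  exact ⟨fun i => h (w i) (q1 i) (q2 i) (q3 i), Pw, Pm,
    by simp [hw0, q10, q20, q30], by simp [hwe, q1e, q2e, q3e]⟩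

/-- Key step: if `e` lies in both fibers and `f` lies in the `a`-fiber, then `f`
lies in the `b`-fiber. -/
lemma fiber_subset (hML : IsMaltsevListPoly AG AH L h)
    (x : VG) (a b : VH) (ha : a ∈ L x) (hb : b ∈ L x)
    (y z : VG) (c f e : VH)
    (hf : InPairList AG AH (Lxa AG AH L x a) y z c f)
    (he : InPairList AG AH (Lxa AG AH L x a) y z c e)
    (he' : InPairList AG AH (Lxa AG AH L x b) y z c e) :
    InPairList AG AH (Lxa AG AH L x b) y z c f := by
  intro ℓ ε w hℓ hw hw0 hwe
  obtain ⟨p1, p1w, p1m, p10, p1e⟩ := hf ℓ ε w hℓ hw hw0 hwe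
  obtain ⟨p2, p2w, p2m, p2_0, p2e⟩ := he ℓ ε w hℓ hw hw0 hwe
  obtain ⟨p3, p3w, p3m, p3_0, p3e⟩ := he' ℓ ε w hℓ hw hw0 hwe
  have m1 : ∀ i, i < ℓ → p1 i ∈ L (w i) := fun i hi => (p1m i hi).1
  have m2 : ∀ i, i < ℓ → p2 i ∈ L (w i) := fun i hi => (p2m i hi).1
  have m3 : ∀ i, i < ℓ → p3 i ∈ L (w i) := fun i hi => (p3m i hi).1
  obtain ⟨Pw, Pm⟩ := walk_poly hML ℓ ε w hw p1 p2 p3 p1w p2w p3w m1 m2 m3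
  have h0 : (0 : ℕ) < ℓ := hℓ
  have hel : ℓ - 1 < ℓ := by omega
  refine ⟨fun i => h (w i) (p1 i) (p2 i) (p3 i), Pw, ?_, ?_, ?_⟩
  · intro i hi
    refine ⟨Pm i hi, ?_⟩
    have hcomb := inPairList_poly hML x (w i) a a b (p1 i) (p2 i) (p3 i)
      (p1m i hi).2 (p2m i hi).2 (p3m i hi).2
    rwa [(hML.2.2 x b a hb ha).2] at hcomb
  · have hc : c ∈ L (w 0) := p10 ▸ m1 0 h0
    simp only [p10, p2_0, p3_0]
    exact (hML.2.2 (w 0) c c hc hc).1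
  · have hfz : f ∈ L (w (ℓ - 1)) := p1e ▸ m1 _ hel
    have hez : e ∈ L (w (ℓ - 1)) := p2e ▸ m2 _ hel
    simp only [p1e, p2e, p3e]
    exact (hML.2.2 (w (ℓ - 1)) f e hfz hez).1

end Aux

/-- with a Maltsev list polymorphism on `G ×_L H³`, for `a, b ∈ L(x)`,
`c ∈ L_{x,a}(y) ∩ L_{x,b}(y)`, if `(c,d) ∈ L_{x,a}(y,z)` and `(c,d') ∈ L_{x,b}(y,z)`
for some `d, d'`, then the fibers `{e : (c,e) ∈ L_{x,a}(y,z)}` and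
`{e : (c,e) ∈ L_{x,b}(y,z)}` are either equal or disjoint. -/
theorem restricted_pair_lists_equal_or_disjoint {VG VH : Type*}
    (AG : VG → VG → Prop) (AH : VH → VH → Prop)
    (L : VG → Set VH) (h : VG → VH → VH → VH → VH)
    (hML : IsMaltsevListPoly AG AH L h)
    (x : VG) (a b : VH) (ha : a ∈ L x) (hb : b ∈ L x)
    (y z : VG) (c : VH)
    (hca : c ∈ Lxa AG AH L x a y) (hcb : c ∈ Lxa AG AH L x b y)
    (d d' : VH)
    (hd : InPairList AG AH (Lxa AG AH L x a) y z c d)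
    (hd' : InPairList AG AH (Lxa AG AH L x b) y z c d') :
    {e | InPairList AG AH (Lxa AG AH L x a) y z c e} =
      {e | InPairList AG AH (Lxa AG AH L x b) y z c e} ∨
    Disjoint {e | InPairList AG AH (Lxa AG AH L x a) y z c e}
      {e | InPairList AG AH (Lxa AG AH L x b) y z c e} := by
  by_cases hdis : Disjoint {e | InPairList AG AH (Lxa AG AH L x a) y z c e}
      {e | InPairList AG AH (Lxa AG AH L x b) y z c e}
  · exact Or.inr hdis
  · left
    obtain ⟨e, hea, heb⟩ := Set.not_disjoint_iff.mp hdis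
    simp only [Set.mem_setOf_eq] at hea heb
    ext f
    simp only [Set.mem_setOf_eq]
    constructor
    · intro hf
      exact fiber_subset hML x a b ha hb y z c f e hf hea heb
    · intro hf
      exact fiber_subset hML x b a hb ha y z c f e hf heb hea
end
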